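/- For every positive integer m and every integer p ≥ 1, and for every conjugacy class c of the symmetric group Σ_m whose cycle type has l cycles, the number of pairs (H, s) where H = Σ_{i₁} × ⋯ × Σ_{i_p} ranges over Young subgroups with i₁+⋯+i_p = m and s ranges over coset representatives in H\Σ_m such that s⁻¹gs ∈ H for a fixed g ∈ c, equals p^l. -/

import Mathlib

open Equiv

/-- The block label of `k ∈ {0,…,m-1}` for the composition `i = (i₁,…,i_p)` of `m`:
the index `j` such that `k` lies in the `j`-th block of `{0,…,m-1}` when it is divided
blockwise into consecutive intervals of sizes `i₁,…,i_p`. -/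
def blockLabel {p : ℕ} (i : Fin p → ℕ) (k : ℕ) : ℕ :=
  (Finset.univ.filter fun j : Fin p => (∑ j' ∈ Finset.univ.filter (· ≤ j), i j') ≤ k).card

/-- The Young subgroup `Σ_{i₁} × ⋯ × Σ_{i_p}` of `Σ_m` associated to an ordered
`p`-tuple `(i₁,…,i_p)` of non-negative integers summing to `m`, embedded blockwise:
the subgroup of permutations preserving each block. -/
def youngSubgroup (m p : ℕ) (i : Fin p → ℕ) : Subgroup (Perm (Fin m)) where
  carrier := {σ | ∀ k : Fin m, blockLabel i (σ k : ℕ) = blockLabel i (k : ℕ)}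
  one_mem' := by intro k; rfl
  mul_mem' := by
    intro a b ha hb k
    simpa [Perm.mul_apply] using (ha (b k)).trans (hb k)
  inv_mem' := by
    intro a ha k
    simpa using (ha (a⁻¹ k)).symm

/-- The number of cycles of a permutation `g` of `{1,…,m}`, counting fixed points as
`1`-cycles (so that the cycle lengths form a partition of `m`). -/
def numCycles {m : ℕ} (g : Perm (Fin m)) : ℕ :=
  g.cycleType.card + (m - g.cycleType.sum)

/-! ### Interval description of `blockLabel` -/

def cumSum {p : ℕ} (i : Fin p → ℕ) (n : ℕ) : ℕ :=
  ∑ j' ∈ Finset.univ.filter (fun j' : Fin p => (j' : ℕ) < n), i j'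

lemma cumSum_mono {p : ℕ} (i : Fin p → ℕ) {n n' : ℕ} (h : n ≤ n') :
    cumSum i n ≤ cumSum i n' := by
  apply Finset.sum_le_sum_of_subset
  intro j hj
  simp only [Finset.mem_filter, Finset.mem_univ, true_and] at *
  omega

lemma cumSum_zero {p : ℕ} (i : Fin p → ℕ) : cumSum i 0 = 0 := by
  simp [cumSum]

lemma cumSum_p {p : ℕ} (i : Fin p → ℕ) : cumSum i p = ∑ j, i j := by
  unfold cumSum
  rw [Finset.filter_true_of_mem (fun j _ => j.is_lt)]

lemma cumSum_succ {p : ℕ} (i : Fin p → ℕ) (j : Fin p) :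
    cumSum i ((j : ℕ) + 1) = cumSum i (j : ℕ) + i j := by
  unfold cumSum
  rw [show (Finset.univ.filter fun j' : Fin p => (j' : ℕ) < (j : ℕ) + 1)
      = insert j (Finset.univ.filter fun j' : Fin p => (j' : ℕ) < (j : ℕ)) from ?_]
  · rw [Finset.sum_insert (by simp)]
    ring
  · ext j'
    simp only [Finset.mem_filter, Finset.mem_univ, true_and, Finset.mem_insert]
    constructor
    · intro h
      rcases Nat.lt_succ_iff_lt_or_eq.mp h with h | h
      · exact Or.inr h
      · exact Or.inl (Fin.ext h)
    · rintro (rfl | h) <;> omega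

lemma blockLabel_eq_card {p : ℕ} (i : Fin p → ℕ) (k : ℕ) :
    blockLabel i k = (Finset.univ.filter fun j : Fin p => cumSum i ((j : ℕ) + 1) ≤ k).card := by
  unfold blockLabel
  congr 1
  apply Finset.filter_congr
  intro j _
  have h : Finset.univ.filter (· ≤ j) = Finset.univ.filter (fun j' : Fin p => (j' : ℕ) < (j : ℕ) + 1) := by
    apply Finset.filter_congr; intro j' _
    rw [Fin.le_def]
    omega
  rw [show (∑ j' ∈ Finset.univ.filter (· ≤ j), i j') = cumSum i ((j:ℕ)+1) from by rw [h]; rfl]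

lemma blockLabel_eq_of_mem_Ico {p : ℕ} (i : Fin p → ℕ) {k j0 : ℕ} (hj0 : j0 < p)
    (h1 : cumSum i j0 ≤ k) (h2 : k < cumSum i (j0 + 1)) :
    blockLabel i k = j0 := by
  rw [blockLabel_eq_card]
  have heq : (Finset.univ.filter fun j : Fin p => cumSum i ((j : ℕ) + 1) ≤ k)
      = Finset.Iio (⟨j0, hj0⟩ : Fin p) := by
    ext j
    simp only [Finset.mem_filter, Finset.mem_univ, true_and, Finset.mem_Iio, Fin.lt_def]
    constructor
    · intro h
      by_contra hc
      push_neg at hc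
      have hmono : cumSum i (j0 + 1) ≤ cumSum i ((j : ℕ) + 1) :=
        cumSum_mono i (by omega)
      omega
    · intro h
      have hmono : cumSum i ((j : ℕ) + 1) ≤ cumSum i j0 := cumSum_mono i (by omega)
      omega
  rw [heq, Fin.card_Iio]

lemma exists_block {m p : ℕ} (i : Fin p → ℕ) (hi : ∑ j, i j = m) {k : ℕ} (hk : k < m) :
    ∃ j0 < p, cumSum i j0 ≤ k ∧ k < cumSum i (j0 + 1) := by
  classical
  have hex : ∃ n, k < cumSum i n := ⟨p, by rw [cumSum_p, hi]; exact hk⟩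
  set n0 := Nat.find hex with hn0def
  have hn0 : k < cumSum i n0 := Nat.find_spec hex
  have h0 : n0 ≠ 0 := by
    intro h
    rw [h, cumSum_zero] at hn0; omega
  have hprev : ¬ k < cumSum i (n0 - 1) := Nat.find_min hex (by omega)
  have hnp : n0 ≤ p := Nat.find_le (by rw [cumSum_p, hi]; exact hk)
  have hlt : n0 - 1 < p := by omega
  refine ⟨n0 - 1, hlt, by omega, ?_⟩
  rwa [Nat.sub_add_cancel (by omega : 1 ≤ n0)]

lemma blockLabel_lt {m p : ℕ} (i : Fin p → ℕ) (hi : ∑ j, i j = m) {k : ℕ} (hk : k < m) :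
    blockLabel i k < p := by
  obtain ⟨j0, hj0, h1, h2⟩ := exists_block i hi hk
  rw [blockLabel_eq_of_mem_Ico i hj0 h1 h2]; exact hj0

lemma card_fiber_blockLabel {m p : ℕ} (i : Fin p → ℕ) (hi : ∑ j, i j = m) (j : Fin p) :
    ((Finset.univ : Finset (Fin m)).filter fun k : Fin m => blockLabel i k.val = (j : ℕ)).card = i j := by
  classical
  have hIco : cumSum i ((j:ℕ)+1) ≤ m := by
    rw [← hi, ← cumSum_p]; exact cumSum_mono i j.is_lt
  have key : ((Finset.univ : Finset (Fin m)).filter fun k : Fin m => blockLabel i k.val = (j : ℕ))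
      = (Finset.Ico (cumSum i (j:ℕ)) (cumSum i ((j:ℕ)+1))).attachFin
        (fun n hn => lt_of_lt_of_le (Finset.mem_Ico.mp hn).2 hIco) := by
    ext k
    simp only [Finset.mem_filter, Finset.mem_univ, true_and, Finset.mem_attachFin,
      Finset.mem_Ico]
    constructor
    · intro h
      obtain ⟨j0, hj0, h1, h2⟩ := exists_block i hi k.is_lt
      have hbl := blockLabel_eq_of_mem_Ico i hj0 h1 h2
      rw [hbl] at h
      rw [← h]
      exact ⟨h1, h2⟩
    · intro h
      exact blockLabel_eq_of_mem_Ico i j.is_lt h.1 h.2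
  rw [key, Finset.card_attachFin, Nat.card_Ico, cumSum_succ]
  omega

/-! ### Counting the orbits of `g` -/

variable {m : ℕ}

def scSetoid (g : Perm (Fin m)) : Setoid (Fin m) :=
  ⟨g.SameCycle, ⟨Perm.SameCycle.refl g, Perm.SameCycle.symm, Perm.SameCycle.trans⟩⟩

lemma invariant_of_sameCycle (g : Perm (Fin m)) {q : Type*} {f : Fin m → q}
    (hf : ∀ k, f (g k) = f k) {x y : Fin m} (h : g.SameCycle x y) : f x = f y := by
  obtain ⟨n, hn⟩ := h
  have hfinv : ∀ x, f (g⁻¹ x) = f x := by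
    intro x
    conv_rhs => rw [← Equiv.apply_symm_apply g x]
    exact (hf (g⁻¹ x)).symm
  have key : ∀ n : ℤ, ∀ x, f ((g ^ n) x) = f x := by
    intro n
    induction n using Int.induction_on with
    | zero => intro x; simp
    | succ n ih =>
      intro x
      rw [zpow_add, zpow_one, Perm.mul_apply, ih, hf]
    | pred n ih =>
      intro x
      rw [sub_eq_add_neg, zpow_add, Perm.mul_apply, ih]
      simpa using hfinv x
  rw [← hn, key]

def invariantEquiv (g : Perm (Fin m)) (q : Type*) :
    {f : Fin m → q // ∀ k, f (g k) = f k} ≃ (Quotient (scSetoid g) → q) where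
  toFun f := Quotient.lift f.1 (fun _ _ h => invariant_of_sameCycle g f.2 h)
  invFun F := ⟨fun k => F (Quotient.mk (scSetoid g) k), fun k => by
    exact congrArg F (@Quotient.sound _ (scSetoid g) _ _ (⟨-1, by simp⟩ : g.SameCycle (g k) k))⟩
  left_inv f := by ext k; rfl
  right_inv F := by
    funext q
    induction q using Quotient.ind
    rfl

open Classical in
noncomputable def toOrbitSum (g : Perm (Fin m)) (x : Fin m) :
    {c // c ∈ g.cycleFactorsFinset} ⊕ {x : Fin m // g x = x} :=
  if h : g x = x then Sum.inr ⟨x, h⟩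
  else Sum.inl ⟨g.cycleOf x,
    Perm.cycleOf_mem_cycleFactorsFinset_iff.mpr (by simp [Perm.mem_support, h])⟩

lemma toOrbitSum_const (g : Perm (Fin m)) {x y : Fin m} (h : g.SameCycle x y) :
    toOrbitSum g x = toOrbitSum g y := by
  classical
  by_cases hx : g x = x
  · have hxy : y = x := by
      obtain ⟨n, hn⟩ := h
      rw [← hn, Perm.zpow_apply_eq_self_of_apply_eq_self hx]
    subst hxy
    rfl
  · by_cases hy : g y = y
    · exfalso
      obtain ⟨n, hn⟩ := h.symm
      have hxy : x = y := by
        rw [← hn, Perm.zpow_apply_eq_self_of_apply_eq_self hy]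
      exact hx (by rw [hxy]; exact hy)
    · unfold toOrbitSum
      rw [dif_neg hx, dif_neg hy]
      congr 1
      exact Subtype.ext (Perm.SameCycle.cycleOf_eq h)

noncomputable def ofOrbitSum (g : Perm (Fin m)) :
    ({c // c ∈ g.cycleFactorsFinset} ⊕ {x : Fin m // g x = x}) → Quotient (scSetoid g)
  | Sum.inr x => Quotient.mk (scSetoid g) x.1
  | Sum.inl c => Quotient.mk (scSetoid g)
      (Perm.IsCycle.nonempty_support (Perm.mem_cycleFactorsFinset_iff.mp c.2).1).choose

noncomputable def orbitSumEquiv (g : Perm (Fin m)) :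
    Quotient (scSetoid g) ≃ ({c // c ∈ g.cycleFactorsFinset} ⊕ {x : Fin m // g x = x}) where
  toFun := Quotient.lift (toOrbitSum g) (fun _ _ h => toOrbitSum_const g h)
  invFun := ofOrbitSum g
  left_inv := by
    intro q
    induction q using Quotient.ind with
    | _ x =>
      show ofOrbitSum g (toOrbitSum g x) = _
      by_cases hx : g x = x
      · unfold toOrbitSum; rw [dif_pos hx]; rfl
      · have hmem : g.cycleOf x ∈ g.cycleFactorsFinset :=
          Perm.cycleOf_mem_cycleFactorsFinset_iff.mpr (by simp [Perm.mem_support, hx])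
        have ht : toOrbitSum g x = Sum.inl ⟨g.cycleOf x, hmem⟩ := by
          unfold toOrbitSum; exact dif_neg hx
        rw [ht]
        have hch := (Perm.IsCycle.nonempty_support
          (Perm.mem_cycleFactorsFinset_iff.mp hmem).1).choose_spec
        exact @Quotient.sound _ (scSetoid g) _ _
          ((Perm.mem_support_cycleOf_iff.mp hch).1).symm
  right_inv := by
    rintro (⟨c, hc⟩ | ⟨x, hx⟩)
    · show Quotient.lift _ _ (Quotient.mk (scSetoid g) _) = _
      rw [Quotient.lift_mk]
      have hch := (Perm.IsCycle.nonempty_support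
        (Perm.mem_cycleFactorsFinset_iff.mp hc).1).choose_spec
      set x0 := (Perm.IsCycle.nonempty_support
        (Perm.mem_cycleFactorsFinset_iff.mp hc).1).choose
      have hgx0 : g x0 ≠ x0 := by
        intro h
        have h1 := (Perm.mem_cycleFactorsFinset_iff.mp hc).2 x0 hch
        exact (Perm.mem_support.mp hch) (by rw [h1, h])
      have hcyc : g.cycleOf x0 = c := (Perm.cycle_is_cycleOf hch hc).symm
      have ht : toOrbitSum g x0 = Sum.inl ⟨g.cycleOf x0,
          Perm.cycleOf_mem_cycleFactorsFinset_iff.mpr (Perm.mem_support.mpr hgx0)⟩ := by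
        unfold toOrbitSum; exact dif_neg hgx0
      rw [ht]
      congr 1
      exact Subtype.ext hcyc
    · show Quotient.lift _ _ (Quotient.mk (scSetoid g) _) = _
      rw [Quotient.lift_mk]
      unfold toOrbitSum
      exact dif_pos hx

theorem card_quotient_eq (g : Perm (Fin m)) :
    Nat.card (Quotient (scSetoid g)) = numCycles g := by
  classical
  rw [Nat.card_congr (orbitSumEquiv g), Nat.card_sum]
  have h1 : Nat.card {c // c ∈ g.cycleFactorsFinset} = g.cycleType.card := by
    rw [Nat.card_eq_fintype_card, Fintype.card_coe]
    simp [Perm.cycleType]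
  have h2 : Nat.card {x : Fin m // g x = x} = m - g.cycleType.sum := by
    rw [Nat.card_eq_fintype_card, Fintype.card_subtype, Perm.sum_cycleType]
    have h3 := Finset.card_filter_add_card_filter_not
      (s := (Finset.univ : Finset (Fin m))) (p := fun x : Fin m => g x = x)
    have h4 : (Finset.univ.filter fun x : Fin m => ¬ g x = x) = g.support := by
      ext x; simp [Perm.mem_support]
    rw [h4, Finset.card_univ, Fintype.card_fin] at h3
    omega
  rw [h1, h2, numCycles]

/-! ### The labelling function attached to a coset -/

section FLabel

variable {p : ℕ}

lemma mem_youngSubgroup {m p : ℕ} {i : Fin p → ℕ} {σ : Perm (Fin m)} :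
    σ ∈ youngSubgroup m p i ↔ ∀ k : Fin m, blockLabel i (σ k : ℕ) = blockLabel i (k : ℕ) :=
  Iff.rfl

def fLabel (i : Fin p → ℕ) (q : Perm (Fin m) ⧸ youngSubgroup m p i) : Fin m → ℕ :=
  Quotient.liftOn' q (fun s k => blockLabel i ((s⁻¹ k : Fin m) : ℕ)) (by
    intro s s' h
    rw [QuotientGroup.leftRel_apply] at h
    funext k
    have h' := (youngSubgroup m p i).inv_mem h
    have happ := mem_youngSubgroup.mp h' (s⁻¹ k)
    have : (s⁻¹ * s')⁻¹ (s⁻¹ k) = s'⁻¹ k := by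
      simp [mul_inv_rev, Perm.mul_apply]
    rw [this] at happ
    exact happ.symm)

lemma fLabel_mk (i : Fin p → ℕ) (s : Perm (Fin m)) (k : Fin m) :
    fLabel i (QuotientGroup.mk s) k = blockLabel i ((s⁻¹ k : Fin m) : ℕ) := rfl

lemma fLabel_inj (i : Fin p → ℕ) (q q' : Perm (Fin m) ⧸ youngSubgroup m p i)
    (h : fLabel i q = fLabel i q') : q = q' := by
  induction q using Quotient.inductionOn' with
  | h s =>
  induction q' using Quotient.inductionOn' with
  | h s' =>
  apply Quotient.sound'
  rw [QuotientGroup.leftRel_apply]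
  rw [mem_youngSubgroup]
  intro t
  have hk := congrFun h (s' t)
  show blockLabel i (((s⁻¹ * s') t : Fin m) : ℕ) = _
  have h1 : (s⁻¹ * s') t = s⁻¹ (s' t) := rfl
  have h2 : fLabel i (QuotientGroup.mk s) (s' t) = blockLabel i ((s⁻¹ (s' t) : Fin m) : ℕ) := rfl
  have h3 : fLabel i (QuotientGroup.mk s') (s' t) = blockLabel i ((s'⁻¹ (s' t) : Fin m) : ℕ) := rfl
  rw [h1, ← h2, hk, h3, show s'⁻¹ (s' t) = t from by simp]

lemma card_fiber_fLabel {i : Fin p → ℕ} (hi : ∑ j, i j = m)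
    (q : Perm (Fin m) ⧸ youngSubgroup m p i) (j : Fin p) :
    ((Finset.univ : Finset (Fin m)).filter fun k : Fin m => fLabel i q k = (j : ℕ)).card = i j := by
  classical
  induction q using Quotient.inductionOn' with
  | h s =>
  have hcard : ((Finset.univ : Finset (Fin m)).filter
        fun k : Fin m => fLabel i (Quotient.mk'' s) k = (j : ℕ)).card
      = ((Finset.univ : Finset (Fin m)).filter
        fun k : Fin m => blockLabel i k.val = (j : ℕ)).card := by
    apply Finset.card_bij' (fun k _ => s⁻¹ k) (fun k _ => s k)
    · intro k hk
      simp only [Finset.mem_filter, Finset.mem_univ, true_and] at hk ⊢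
      exact hk
    · intro k hk
      simp only [Finset.mem_filter, Finset.mem_univ, true_and] at hk ⊢
      show blockLabel i ((s⁻¹ (s k) : Fin m) : ℕ) = (j : ℕ)
      rwa [show s⁻¹ (s k) = k from by simp]
    · intro k _; simp
    · intro k _; simp
  rw [hcard, card_fiber_blockLabel i hi j]

end FLabel

/-! ### Main theorem -/

theorem card_young_cosets_conj_eq_pow
    (m p : ℕ) (hm : 0 < m) (hp : 1 ≤ p) (g : Perm (Fin m)) :
    Nat.card
      {x : Σ i : {i : Fin p → ℕ // ∑ j, i j = m}, Perm (Fin m) ⧸ youngSubgroup m p i.1 //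
        ∃ s : Perm (Fin m), (QuotientGroup.mk s : Perm (Fin m) ⧸ youngSubgroup m p x.1.1) = x.2
          ∧ s⁻¹ * g * s ∈ youngSubgroup m p x.1.1} = p ^ numCycles g := by
  classical
  set BigSet := {x : Σ i : {i : Fin p → ℕ // ∑ j, i j = m}, Perm (Fin m) ⧸ youngSubgroup m p i.1 //
        ∃ s : Perm (Fin m), (QuotientGroup.mk s : Perm (Fin m) ⧸ youngSubgroup m p x.1.1) = x.2
          ∧ s⁻¹ * g * s ∈ youngSubgroup m p x.1.1} with hBig
  set P := {f : Fin m → Fin p // ∀ k, f (g k) = f k} with hP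
  -- the value of fLabel is < p
  have hlt : ∀ (i : {i : Fin p → ℕ // ∑ j, i j = m})
      (q : Perm (Fin m) ⧸ youngSubgroup m p i.1) (k : Fin m), fLabel i.1 q k < p := by
    intro i q k
    induction q using Quotient.inductionOn' with
    | h s =>
      show blockLabel i.1 ((s⁻¹ k : Fin m) : ℕ) < p
      exact blockLabel_lt i.1 i.2 (s⁻¹ k).is_lt
  -- the map Φ
  set Φ : BigSet → P := fun x =>
    ⟨fun k => ⟨fLabel x.1.1.1 x.1.2 k, hlt x.1.1 x.1.2 k⟩, by
      obtain ⟨s, hs, hmem⟩ := x.2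
      intro k
      apply Fin.ext
      show fLabel x.1.1.1 x.1.2 (g k) = fLabel x.1.1.1 x.1.2 k
      rw [← hs, fLabel_mk, fLabel_mk]
      have ht := mem_youngSubgroup.mp hmem (s⁻¹ k)
      have h1 : (s⁻¹ * g * s) (s⁻¹ k) = s⁻¹ (g k) := by
        simp [Perm.mul_apply]
      rw [h1] at ht
      exact ht⟩ with hΦ
  have hbij : Function.Bijective Φ := by
    constructor
    · -- injective
      rintro ⟨⟨⟨i, hi⟩, q⟩, hx⟩ ⟨⟨⟨i', hi'⟩, q'⟩, hx'⟩ h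
      have hfun : ∀ k, fLabel i q k = fLabel i' q' k := by
        intro k
        have := congrFun (congrArg Subtype.val h) k
        exact congrArg Fin.val this
      have hieq : i = i' := by
        funext j
        rw [← card_fiber_fLabel hi q j, ← card_fiber_fLabel hi' q' j]
        congr 1
        apply Finset.filter_congr
        intro k _
        rw [hfun k]
      subst hieq
      have hqeq : q = q' := fLabel_inj i q q' (funext hfun)
      subst hqeq
      rfl
    · -- surjective
      rintro ⟨f, hf⟩
      set i : Fin p → ℕ := fun j => ((Finset.univ : Finset (Fin m)).filter fun k => f k = j).card
        with hidef
      have hi : ∑ j, i j = m := by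
        rw [hidef]
        rw [← Finset.card_eq_sum_card_fiberwise (fun k _ => Finset.mem_univ (f k))]
        simp
      set bl : Fin m → Fin p := fun k => ⟨blockLabel i k.val, blockLabel_lt i hi k.is_lt⟩
        with hbl
      have hfib : ∀ j : Fin p,
          Fintype.card {k : Fin m // bl k = j} = Fintype.card {k : Fin m // f k = j} := by
        intro j
        rw [Fintype.card_subtype, Fintype.card_subtype]
        have h1 : ((Finset.univ : Finset (Fin m)).filter fun k => bl k = j)
            = ((Finset.univ : Finset (Fin m)).filter fun k : Fin m => blockLabel i k.val = (j : ℕ)) := by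
          apply Finset.filter_congr
          intro k _
          rw [hbl, Fin.ext_iff]
        rw [h1, card_fiber_blockLabel i hi j]
      set hequiv : ∀ j : Fin p, {k : Fin m // bl k = j} ≃ {k : Fin m // f k = j} :=
        fun j => Fintype.equivOfCardEq (hfib j) with hequivdef
      set σ : Perm (Fin m) :=
        ((sigmaFiberEquiv bl).symm.trans (Equiv.sigmaCongrRight hequiv)).trans
          (sigmaFiberEquiv f) with hσdef
      have hσ : ∀ k, f (σ k) = bl k := by
        intro k
        show f ((sigmaFiberEquiv f) ((Equiv.sigmaCongrRight hequiv) ((sigmaFiberEquiv bl).symm k))) = bl k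
        have h0 : (sigmaFiberEquiv bl).symm k = ⟨bl k, ⟨k, rfl⟩⟩ := rfl
        rw [h0]
        have h1 : (Equiv.sigmaCongrRight hequiv) (⟨bl k, ⟨k, rfl⟩⟩ : Σ j, {k : Fin m // bl k = j})
            = ⟨bl k, hequiv (bl k) ⟨k, rfl⟩⟩ := rfl
        rw [h1]
        exact (hequiv (bl k) ⟨k, rfl⟩).2
      have hkey : ∀ k, blockLabel i ((σ⁻¹ k : Fin m) : ℕ) = ((f k : Fin p) : ℕ) := by
        intro k
        have := hσ (σ⁻¹ k)
        rw [show σ (σ⁻¹ k) = k from by simp] at this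
        rw [this]
      have hmem : σ⁻¹ * g * σ ∈ youngSubgroup m p i := by
        rw [mem_youngSubgroup]
        intro t
        have h1 : (σ⁻¹ * g * σ) t = σ⁻¹ (g (σ t)) := rfl
        rw [h1, hkey (g (σ t)), hf (σ t)]
        have h2 : f (σ t) = bl t := hσ t
        rw [h2]
      refine ⟨⟨⟨⟨i, hi⟩, QuotientGroup.mk σ⟩, ⟨σ, rfl, hmem⟩⟩, ?_⟩
      apply Subtype.ext
      funext k
      apply Fin.ext
      show fLabel i (QuotientGroup.mk σ) k = ((f k : Fin p) : ℕ)
      rw [fLabel_mk]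
      exact hkey k
  have hcard1 : Nat.card BigSet = Nat.card P := Nat.card_eq_of_bijective Φ hbij
  have hfin : Finite (Quotient (scSetoid g)) :=
    Finite.of_surjective (Quotient.mk (scSetoid g)) (fun q => Quot.exists_rep q)
  have hcard2 : Nat.card P = p ^ numCycles g := by
    rw [Nat.card_congr (invariantEquiv g (Fin p)), Nat.card_fun, Nat.card_eq_fintype_card,
      Fintype.card_fin, card_quotient_eq]
  rw [hcard1, hcard2]
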